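/- Let q_1, …, q_k ∈ [0, 1] and define x_ℓ = (1 − q_ℓ)·Π_{j=1}^{ℓ−1} q_j for ℓ = 1, …, k. Then for every subset S ⊆ {1, …, k}, Σ_{ℓ∈S} x_ℓ ≤ 1 − Π_{ℓ∈S} q_ℓ, with equality when S = {1, …, |S|} is a prefix. -/

import Mathlib

private lemma cascade_aux (q : ℕ → ℝ) (S : Finset ℕ) :
    (∑ ℓ ∈ S, (1 - q ℓ) * ∏ j ∈ S.filter (· < ℓ), q j) = 1 - ∏ ℓ ∈ S, q ℓ := by
  induction S using Finset.induction_on_max with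
  | empty => simp
  | insert a S ha ih =>
    rw [Finset.sum_insert (fun h => lt_irrefl a (ha a h))]
    have hfa : (insert a S).filter (· < a) = S := by
      ext x
      simp only [Finset.mem_filter, Finset.mem_insert]
      constructor
      · rintro ⟨h | h, hx⟩
        · exact absurd hx (by simp [h])
        · exact h
      · exact fun hx => ⟨Or.inr hx, ha x hx⟩
    have hfS : ∀ ℓ ∈ S, (insert a S).filter (· < ℓ) = S.filter (· < ℓ) := by
      intro ℓ hℓ
      ext x
      simp only [Finset.mem_filter, Finset.mem_insert]
      constructor
      · rintro ⟨h | h, hx⟩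
        · exact absurd (hx.trans (ha ℓ hℓ)) (by simp [h])
        · exact ⟨h, hx⟩
      · exact fun ⟨h1, h2⟩ => ⟨Or.inr h1, h2⟩
    rw [hfa, Finset.sum_congr rfl (fun ℓ hℓ => by rw [hfS ℓ hℓ]), ih,
      Finset.prod_insert (fun h => lt_irrefl a (ha a h))]
    ring

/-- **Stopping probabilities satisfy the polymatroid constraints.**
In the cascade model, with continuation probabilities `q 0, …, q (k−1) ∈ [0, 1]`
(slots indexed from `0`), the probability that the ad in slot `ℓ` is the last one
scanned is `x ℓ = (1 − q ℓ)·Π_{j<ℓ} q j`.  Then for every `S ⊆ {0, …, k−1}`,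
`Σ_{ℓ∈S} x ℓ ≤ 1 − Π_{ℓ∈S} q ℓ`, with equality whenever `S` is a prefix
`{0, …, m−1}`. -/
theorem cascade_polymatroid_constraints
    (k : ℕ) (q : ℕ → ℝ) (hq0 : ∀ ℓ, 0 ≤ q ℓ) (hq1 : ∀ ℓ, q ℓ ≤ 1) :
    (∀ S : Finset ℕ, S ⊆ Finset.range k →
      (∑ ℓ ∈ S, (1 - q ℓ) * ∏ j ∈ Finset.range ℓ, q j) ≤ 1 - ∏ ℓ ∈ S, q ℓ) ∧
    (∀ m : ℕ, m ≤ k →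
      (∑ ℓ ∈ Finset.range m, (1 - q ℓ) * ∏ j ∈ Finset.range ℓ, q j) =
        1 - ∏ ℓ ∈ Finset.range m, q ℓ) := by
  constructor
  · intro S _
    calc (∑ ℓ ∈ S, (1 - q ℓ) * ∏ j ∈ Finset.range ℓ, q j)
        ≤ ∑ ℓ ∈ S, (1 - q ℓ) * ∏ j ∈ S.filter (· < ℓ), q j := by
          apply Finset.sum_le_sum
          intro ℓ _
          apply mul_le_mul_of_nonneg_left _ (by linarith [hq1 ℓ])
          have hsub : S.filter (· < ℓ) ⊆ Finset.range ℓ := by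
            intro x hx
            simp only [Finset.mem_filter] at hx
            exact Finset.mem_range.mpr hx.2
          have hsd := Finset.prod_sdiff (f := q) hsub
          have h1 : ∏ j ∈ Finset.range ℓ \ S.filter (· < ℓ), q j ≤ 1 :=
            Finset.prod_le_one (fun i _ => hq0 i) (fun i _ => hq1 i)
          have h2 : 0 ≤ ∏ j ∈ S.filter (· < ℓ), q j :=
            Finset.prod_nonneg (fun i _ => hq0 i)
          calc (∏ j ∈ Finset.range ℓ, q j)
              = (∏ j ∈ Finset.range ℓ \ S.filter (· < ℓ), q j) * ∏ j ∈ S.filter (· < ℓ), q j := hsd.symm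
            _ ≤ 1 * ∏ j ∈ S.filter (· < ℓ), q j := mul_le_mul_of_nonneg_right h1 h2
            _ = ∏ j ∈ S.filter (· < ℓ), q j := one_mul _
      _ = 1 - ∏ ℓ ∈ S, q ℓ := cascade_aux q S
  · intro m _
    have := cascade_aux q (Finset.range m)
    rw [← this]
    apply Finset.sum_congr rfl
    intro ℓ hℓ
    have : (Finset.range m).filter (· < ℓ) = Finset.range ℓ := by
      ext x
      simp only [Finset.mem_filter, Finset.mem_range, Finset.mem_range] at *
      exact ⟨fun h => h.2, fun h => ⟨h.trans hℓ, h⟩⟩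
    rw [this]
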